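/- arXiv:2303.08816 — 3 statements merged into one kernel-verified Lean document; each statement's English description precedes it below -/
import Mathlib

section
/- In the hard instance construction, the Borda score of item i equals 5/8 + (1/2)⟨bit(i), θ⟩ when i < 2^d, and equals 3/8 when i ≥ 2^d. -/
lemma bitsum_aux (d k : ℕ) (hk : k < d) :
    ∑ j ∈ Finset.range (2 ^ d), (if Nat.testBit j k then (1 : ℝ) else -1) = 0 := by
  apply Finset.sum_involution (fun j _ => j ^^^ 2 ^ k)
  · intro j hj
    have h : Nat.testBit (j ^^^ 2 ^ k) k = ! Nat.testBit j k := by simp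
    rcases Bool.eq_false_or_eq_true (Nat.testBit j k) with h' | h' <;> simp [h, h']
  · intro j hj _
    intro hcontra
    have h : Nat.testBit (j ^^^ 2 ^ k) k = ! Nat.testBit j k := by simp
    rw [hcontra] at h
    simp at h
  · intro j hj
    simp [xor_cancel_right]
  · intro j hj
    simp only [Finset.mem_range] at hj ⊢
    exact Nat.xor_lt_two_pow hj (Nat.pow_lt_pow_right one_lt_two hk)

theorem hard_instance_borda_scores (d : ℕ) (hd : 1 ≤ d) (Δ : ℝ) (θ : Fin d → ℝ)
    (hθ : ∀ k, θ k = Δ ∨ θ k = -Δ)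
    (bit : ℕ → Fin d → ℝ)
    (hbit : ∀ x k, bit x k = if Nat.testBit x (k : ℕ) then 1 else -1)
    (p : ℕ → ℕ → ℝ)
    (hp : ∀ i j, p i j =
      if i < 2 ^ d ∧ j < 2 ^ d then 1 / 2
      else if 2 ^ d ≤ i ∧ 2 ^ d ≤ j then 1 / 2
      else if i < 2 ^ d then 3 / 4 + ∑ k, bit i k * θ k
      else 1 / 4 - ∑ k, bit j k * θ k)
    (B : ℕ → ℝ)
    (hB : ∀ i, B i = (1 / (2 ^ (d + 1) : ℝ)) * ∑ j ∈ Finset.range (2 ^ (d + 1)), p i j) :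
    ∀ i < 2 ^ (d + 1),
      (i < 2 ^ d → B i = 5 / 8 + (1 / 2) * ∑ k, bit i k * θ k) ∧
      (2 ^ d ≤ i → B i = 3 / 8) := by
  have hpow : 2 ^ (d + 1) = 2 ^ d + 2 ^ d := by ring
  have key0 : ∀ k : Fin d, ∑ j ∈ Finset.range (2 ^ d), bit j k = 0 := by
    intro k
    simp_rw [hbit]
    exact bitsum_aux d k k.isLt
  intro i hi
  constructor
  · intro hilt
    rw [hB, hpow, Finset.sum_range_add]
    have h1 : ∀ j ∈ Finset.range (2 ^ d), p i j = 1 / 2 := by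
      intro j hj
      rw [hp, if_pos ⟨hilt, Finset.mem_range.mp hj⟩]
    have h2 : ∀ j ∈ Finset.range (2 ^ d),
        p i (2 ^ d + j) = 3 / 4 + ∑ k, bit i k * θ k := by
      intro j hj
      rw [hp, if_neg (by omega), if_neg (by omega), if_pos hilt]
    rw [Finset.sum_congr rfl h1, Finset.sum_congr rfl h2, Finset.sum_const,
      Finset.sum_const, Finset.card_range, nsmul_eq_mul, nsmul_eq_mul]
    have h2d : ((2 : ℝ) ^ d) ≠ 0 := by positivity
    have hcast : ((2 : ℝ) ^ (d + 1)) = 2 * 2 ^ d := by ring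
    push_cast
    rw [hcast]
    field_simp
    ring
  · intro hige
    rw [hB, hpow, Finset.sum_range_add]
    have h1 : ∀ j ∈ Finset.range (2 ^ d),
        p i j = 1 / 4 - ∑ k, bit j k * θ k := by
      intro j hj
      have hj' := Finset.mem_range.mp hj
      rw [hp, if_neg (by omega), if_neg (by omega), if_neg (by omega)]
    have h2 : ∀ j ∈ Finset.range (2 ^ d), p i (2 ^ d + j) = 1 / 2 := by
      intro j hj
      rw [hp, if_neg (by omega), if_pos ⟨hige, by omega⟩]
    rw [Finset.sum_congr rfl h1, Finset.sum_congr rfl h2]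
    have hz : ∑ j ∈ Finset.range (2 ^ d), ∑ k, bit j k * θ k = 0 := by
      rw [Finset.sum_comm]
      apply Finset.sum_eq_zero
      intro k _
      rw [← Finset.sum_mul, key0 k, zero_mul]
    rw [Finset.sum_sub_distrib, hz, Finset.sum_const, Finset.sum_const,
      Finset.card_range, nsmul_eq_mul, nsmul_eq_mul]
    have hcast : ((2 : ℝ) ^ (d + 1)) = 2 * 2 ^ d := by ring
    have h2d : ((2 : ℝ) ^ d) ≠ 0 := by positivity
    push_cast
    rw [hcast]
    field_simp
    ring
end

section
/- In the hard instance, the unique Borda winner among all items is the item i* < 2^d with bit(i*) = sign(θ), where sign(θ)_k = 1 if θ_k = Δ and -1 if θ_k = -Δ, and its Borda score is 5/8 + dΔ/2. -/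
lemma sum_pow_bits (g : ℕ → Bool) (d : ℕ) :
    (∑ k ∈ Finset.range d, if g k then 2 ^ k else 0) < 2 ^ d ∧
    ∀ k, Nat.testBit (∑ k ∈ Finset.range d, if g k then 2 ^ k else 0) k =
      (g k && decide (k < d)) := by
  induction d with
  | zero => simp
  | succ d ih =>
    obtain ⟨hlt, hbit⟩ := ih
    rw [Finset.sum_range_succ]
    constructor
    · have : (if g d then 2 ^ d else 0) ≤ 2 ^ d := by split <;> simp
      have := Nat.add_lt_add_of_lt_of_le hlt this
      omega
    · intro k
      rcases lt_trichotomy k d with hk | hk | hk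
      · have h1 : (k < d + 1) = True := by simp; omega
        by_cases hg : g d
        · rw [if_pos hg, Nat.add_comm, Nat.testBit_two_pow_add_gt hk, hbit k]
          simp [hk, h1, Nat.lt_of_lt_of_le hk (Nat.le_succ d)]
        · rw [if_neg hg, Nat.add_zero, hbit k]; simp [hk]; omega
      · subst hk
        by_cases hg : g k
        · rw [if_pos hg, Nat.add_comm, Nat.testBit_two_pow_add_eq,
            Nat.testBit_eq_false_of_lt hlt]
          simp [hg]
        · rw [if_neg hg, Nat.add_zero, Nat.testBit_eq_false_of_lt hlt]
          simp [hg]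
      · have hlt' : (∑ k ∈ Finset.range d, if g k then 2 ^ k else 0)
            + (if g d then 2 ^ d else 0) < 2 ^ k := by
          have h2 : (2:ℕ) ^ (d+1) ≤ 2 ^ k := Nat.pow_le_pow_right (by norm_num) hk
          have : (if g d then 2 ^ d else 0) ≤ 2 ^ d := by split <;> simp
          have h3 : (2:ℕ)^(d+1) = 2^d + 2^d := by ring
          omega
        rw [Nat.testBit_eq_false_of_lt hlt']
        simp; omega

theorem hard_instance_unique_winner (d : ℕ) (hd : 1 ≤ d) (Δ : ℝ) (hΔ : 0 < Δ)
    (hdΔ : (d : ℝ) * Δ ≤ 1 / 8) (θ : Fin d → ℝ)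
    (hθ : ∀ k, θ k = Δ ∨ θ k = -Δ)
    (bit : ℕ → Fin d → ℝ)
    (hbit : ∀ x k, bit x k = if Nat.testBit x (k : ℕ) then 1 else -1)
    (sign : Fin d → ℝ)
    (hsign : ∀ k, sign k = if θ k = Δ then 1 else -1)
    (B : ℕ → ℝ)
    (hB : ∀ i, B i = if i < 2 ^ d then 5 / 8 + (1 / 2) * ∑ k, bit i k * θ k else 3 / 8) :
    ∃! istar : ℕ, istar < 2 ^ (d + 1) ∧
      (istar < 2 ^ d ∧ (∀ k, bit istar k = sign k) ∧
        B istar = 5 / 8 + (d : ℝ) * Δ / 2 ∧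
        ∀ i < 2 ^ (d + 1), i ≠ istar → B i < B istar) := by
  classical
  set g : ℕ → Bool := fun k => decide (∃ h : k < d, θ ⟨k, h⟩ = Δ) with hg
  set istar : ℕ := ∑ k ∈ Finset.range d, if g k then 2 ^ k else 0 with histar
  obtain ⟨hlt, htb⟩ := sum_pow_bits g d
  -- testBit istar k for k < d equals whether θ k = Δ
  have htb' : ∀ k : Fin d, Nat.testBit istar (k : ℕ) = decide (θ k = Δ) := by
    intro k
    rw [htb (k : ℕ)]
    have : g (k : ℕ) = decide (θ k = Δ) := by
      simp only [hg, decide_eq_decide]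
      constructor
      · rintro ⟨h, hh⟩; convert hh
      · intro h; exact ⟨k.isLt, by convert h⟩
    simp [this, k.isLt]
  have hbits : ∀ k : Fin d, bit istar k = sign k := by
    intro k
    rw [hbit, hsign, htb' k]
    by_cases h : θ k = Δ <;> simp [h]
  -- each product term
  have hterm : ∀ (i : ℕ) (k : Fin d), bit i k * θ k ≤ Δ := by
    intro i k
    rw [hbit]
    rcases hθ k with h | h <;> rw [h] <;> split <;> nlinarith
  have hterm_star : ∀ k : Fin d, bit istar k * θ k = Δ := by
    intro k
    rw [hbits k, hsign]
    rcases hθ k with h | h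
    · rw [if_pos h, h]; ring
    · have hne : θ k ≠ Δ := by rw [h]; intro hc; nlinarith
      rw [if_neg hne, h]; ring
  have hsum_star : ∑ k, bit istar k * θ k = (d : ℝ) * Δ := by
    rw [Finset.sum_congr rfl (fun k _ => hterm_star k)]
    simp [mul_comm]
  have hBstar : B istar = 5 / 8 + (d : ℝ) * Δ / 2 := by
    rw [hB, if_pos hlt, hsum_star]; ring
  have hBstar_big : (5:ℝ)/8 ≤ B istar := by
    rw [hBstar]
    have : 0 ≤ (d:ℝ) * Δ := by positivity
    linarith
  have hmax : ∀ i < 2 ^ (d + 1), i ≠ istar → B i < B istar := by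
    intro i _ hne
    by_cases hi : i < 2 ^ d
    · -- some bit differs
      have hdiff : ∃ k : Fin d, Nat.testBit i (k:ℕ) ≠ Nat.testBit istar (k:ℕ) := by
        by_contra hc
        push_neg at hc
        apply hne
        apply Nat.eq_of_testBit_eq
        intro j
        by_cases hj : j < d
        · exact hc ⟨j, hj⟩
        · rw [Nat.testBit_eq_false_of_lt, Nat.testBit_eq_false_of_lt]
          · exact lt_of_lt_of_le hlt (Nat.pow_le_pow_right (by norm_num) (by omega))
          · exact lt_of_lt_of_le hi (Nat.pow_le_pow_right (by norm_num) (by omega))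
      obtain ⟨k0, hk0⟩ := hdiff
      have hk0' : bit i k0 * θ k0 < Δ := by
        rw [htb' k0] at hk0; rw [hbit]
        rcases hθ k0 with h | h
        · have : ¬ Nat.testBit i (k0:ℕ) := by
            intro hc; apply hk0; simp [hc, h]
          rw [if_neg this, h]; nlinarith
        · have hne2 : θ k0 ≠ Δ := by rw [h]; intro hc; nlinarith
          have : Nat.testBit i (k0:ℕ) := by
            by_contra hc; apply hk0; simp [hc, hne2]; simpa using hc
          rw [if_pos this, h]; nlinarith
      have hsum : ∑ k, bit i k * θ k < ∑ k, bit istar k * θ k := by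
        rw [hsum_star]
        calc ∑ k, bit i k * θ k
            < ∑ k : Fin d, Δ := by
              apply Finset.sum_lt_sum (fun k _ => hterm i k)
              exact ⟨k0, Finset.mem_univ _, hk0'⟩
          _ = (d : ℝ) * Δ := by simp [mul_comm]
      rw [hB i, if_pos hi, hBstar]
      have : (1:ℝ)/2 * ∑ k, bit i k * θ k < (1:ℝ)/2 * ((d:ℝ) * Δ) := by linarith
      linarith
    · rw [hB i, if_neg hi]
      linarith
  have hlt2 : istar < 2 ^ (d + 1) :=
    lt_of_lt_of_le hlt (Nat.pow_le_pow_right (by norm_num) (by omega))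
  refine ⟨istar, ⟨hlt2, hlt, hbits, hBstar, hmax⟩, ?_⟩
  rintro j ⟨hj2, hj1, hjbits, hjB, hjmax⟩
  by_contra hne
  exact absurd (hmax j hj2 hne) (not_lt.mpr (le_of_lt (hjmax istar hlt2 (Ne.symm hne))))
end

section
/- In the BEXP3 algorithm, with q_t(i) ≥ γ/K for all i and Σ := (1/K²) Σ_{i,j} φ_{i,j}φ_{i,j}^⊤ having minimum eigenvalue at least λ₀ > 0, the score estimate satisfies |B̂_t(i)| ≤ λ₀^{-1}/γ² for all i. -/
open Matrix

private lemma bexp3_sum_mulVec {ι d : Type*} [Fintype d] [DecidableEq d] (s : Finset ι)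
    (M : ι → Matrix d d ℝ) (x : d → ℝ) :
    (∑ i ∈ s, M i) *ᵥ x = ∑ i ∈ s, M i *ᵥ x := by
  ext a
  simp [mulVec, dotProduct, Matrix.sum_apply, Finset.sum_mul]
  rw [Finset.sum_comm]

private lemma bexp3_dotProduct_sum {ι d : Type*} [Fintype d] (s : Finset ι)
    (x : d → ℝ) (v : ι → d → ℝ) :
    x ⬝ᵥ (∑ i ∈ s, v i) = ∑ i ∈ s, x ⬝ᵥ v i := by
  simp [dotProduct, Finset.sum_apply, Finset.mul_sum]
  rw [Finset.sum_comm]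

private lemma bexp3_quad_term {d : ℕ} (c : ℝ) (v x : Fin d → ℝ) :
    x ⬝ᵥ ((c • Matrix.vecMulVec v v) *ᵥ x) = c * (v ⬝ᵥ x)^2 := by
  simp only [dotProduct, mulVec, Matrix.smul_apply, Matrix.vecMulVec_apply, smul_eq_mul, sq,
    Finset.mul_sum, Finset.sum_mul]
  refine Finset.sum_congr rfl fun a _ => Finset.sum_congr rfl fun b _ => ?_
  ring

private lemma bexp3_quad_sum {K d : ℕ} (c : Fin K → Fin K → ℝ) (v : Fin K → Fin K → Fin d → ℝ)
    (x : Fin d → ℝ) :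
    x ⬝ᵥ ((∑ i, ∑ j, c i j • Matrix.vecMulVec (v i j) (v i j)) *ᵥ x)
      = ∑ i, ∑ j, c i j * (v i j ⬝ᵥ x)^2 := by
  rw [bexp3_sum_mulVec, bexp3_dotProduct_sum]
  refine Finset.sum_congr rfl fun i _ => ?_
  rw [bexp3_sum_mulVec, bexp3_dotProduct_sum]
  exact Finset.sum_congr rfl fun j _ => bexp3_quad_term _ _ _

private lemma bexp3_dp_cs {d : ℕ} (x y : Fin d → ℝ) :
    (x ⬝ᵥ y)^2 ≤ (x ⬝ᵥ x) * (y ⬝ᵥ y) := by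
  have h := Finset.sum_mul_sq_le_sq_mul_sq Finset.univ x y
  simpa [dotProduct, sq] using h

theorem bexp3_estimate_bound (d K : ℕ) (hK : 1 ≤ K) (γ lam0 : ℝ)
    (hγ : 0 < γ) (hlam0 : 0 < lam0)
    (q : Fin K → ℝ) (hq : ∀ i, γ / K ≤ q i) (hqsum : ∑ i, q i = 1)
    (φ : Fin K → Fin K → Fin d → ℝ) (hφ : ∀ i j, φ i j ⬝ᵥ φ i j ≤ 1)
    (Sm : Matrix (Fin d) (Fin d) ℝ)
    (hSm : Sm = (1 / (K : ℝ) ^ 2) • ∑ i, ∑ j, Matrix.vecMulVec (φ i j) (φ i j))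
    (hSmin : ∀ x : Fin d → ℝ, lam0 * (x ⬝ᵥ x) ≤ x ⬝ᵥ Sm *ᵥ x)
    (Q : Matrix (Fin d) (Fin d) ℝ)
    (hQ : Q = ∑ i, ∑ j, (q i * q j) • Matrix.vecMulVec (φ i j) (φ i j))
    (it jt : Fin K) (r : ℝ) (hr0 : 0 ≤ r) (hr1 : r ≤ 1)
    (θhat : Fin d → ℝ) (hθhat : θhat = Q⁻¹ *ᵥ (r • φ it jt))
    (Bhat : Fin K → ℝ)
    (hBhat : ∀ i, Bhat i = ((1 / (K : ℝ)) • ∑ j, φ i j) ⬝ᵥ θhat) :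
    ∀ i, |Bhat i| ≤ lam0⁻¹ / γ ^ 2 := by
  have hKpos : (0:ℝ) < K := by exact_mod_cast hK
  set c : ℝ := γ ^ 2 * lam0 with hc
  have hcpos : 0 < c := by positivity
  -- quadratic form lower bound
  have hquad : ∀ x : Fin d → ℝ, c * (x ⬝ᵥ x) ≤ x ⬝ᵥ Q *ᵥ x := by
    intro x
    have h1 : x ⬝ᵥ Q *ᵥ x = ∑ i, ∑ j, (q i * q j) * (φ i j ⬝ᵥ x)^2 := by
      rw [hQ]; exact bexp3_quad_sum _ _ _
    have h2 : x ⬝ᵥ Sm *ᵥ x = (1 / (K:ℝ)^2) * ∑ i, ∑ j, (φ i j ⬝ᵥ x)^2 := by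
      rw [hSm, smul_mulVec, dotProduct_smul, smul_eq_mul]
      congr 1
      have : (∑ i, ∑ j, Matrix.vecMulVec (φ i j) (φ i j))
          = ∑ i, ∑ j, (1:ℝ) • Matrix.vecMulVec (φ i j) (φ i j) := by simp
      rw [this, bexp3_quad_sum]
      simp
    have hstep : ∀ i j, (γ/K)^2 * (φ i j ⬝ᵥ x)^2 ≤ (q i * q j) * (φ i j ⬝ᵥ x)^2 := by
      intro i j
      apply mul_le_mul_of_nonneg_right _ (sq_nonneg _)
      have hγK : 0 ≤ γ / (K:ℝ) := by positivity
      have hi := hq i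
      have hj := hq j
      nlinarith
    calc c * (x ⬝ᵥ x) = γ^2 * (lam0 * (x ⬝ᵥ x)) := by ring
      _ ≤ γ^2 * (x ⬝ᵥ Sm *ᵥ x) := by
          have := hSmin x
          nlinarith [sq_nonneg γ]
      _ = ∑ i, ∑ j, (γ/K)^2 * (φ i j ⬝ᵥ x)^2 := by
          rw [h2, Finset.mul_sum, Finset.mul_sum]
          refine Finset.sum_congr rfl fun i _ => ?_
          rw [Finset.mul_sum, Finset.mul_sum]
          refine Finset.sum_congr rfl fun j _ => ?_
          rw [div_pow]
          field_simp
      _ ≤ ∑ i, ∑ j, (q i * q j) * (φ i j ⬝ᵥ x)^2 :=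
          Finset.sum_le_sum fun i _ => Finset.sum_le_sum fun j _ => hstep i j
      _ = x ⬝ᵥ Q *ᵥ x := h1.symm
  -- positive definiteness
  have hpd : Q.PosDef := by
    rw [posDef_iff_dotProduct_mulVec]
    constructor
    · rw [hQ]
      ext a b
      simp only [conjTranspose_apply, Matrix.sum_apply, Matrix.smul_apply,
        Matrix.vecMulVec_apply, smul_eq_mul, star_trivial]
      refine Finset.sum_congr rfl fun i _ => Finset.sum_congr rfl fun j _ => by ring
    · intro x hx
      have h0 : 0 < x ⬝ᵥ x := by
        rcases lt_or_eq_of_le (Finset.sum_nonneg fun i _ => mul_self_nonneg (x i)) with h | h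
        · exact h
        · exact absurd (dotProduct_self_eq_zero.mp h.symm) hx
      have := hquad x
      simp only [star_trivial]
      nlinarith
  have hdet : IsUnit Q.det := hpd.det_pos.ne'.isUnit
  set y : Fin d → ℝ := r • φ it jt with hy
  have hQθ : Q *ᵥ θhat = y := by
    rw [hθhat, mulVec_mulVec, Matrix.mul_nonsing_inv Q hdet, one_mulVec]
  have hyy : y ⬝ᵥ y ≤ 1 := by
    have : y ⬝ᵥ y = r^2 * (φ it jt ⬝ᵥ φ it jt) := by
      simp [hy, dotProduct, Finset.mul_sum, sq]
      refine Finset.sum_congr rfl fun a _ => by ring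
    rw [this]
    nlinarith [hφ it jt, dotProduct_self_eq_zero (v := φ it jt),
      Finset.sum_nonneg fun a (_ : a ∈ Finset.univ) => mul_self_nonneg (φ it jt a)]
  have hθθ : 0 ≤ θhat ⬝ᵥ θhat :=
    Finset.sum_nonneg fun a _ => mul_self_nonneg (θhat a)
  set t : ℝ := Real.sqrt (θhat ⬝ᵥ θhat) with ht
  have ht0 : 0 ≤ t := Real.sqrt_nonneg _
  have ht2 : θhat ⬝ᵥ θhat = t^2 := (Real.sq_sqrt hθθ).symm
  -- c t^2 ≤ t
  have hkey : c * t^2 ≤ t := by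
    have h1 : c * t^2 ≤ θhat ⬝ᵥ y := by
      rw [← ht2, ← hQθ]; exact hquad θhat
    have h2 : (θhat ⬝ᵥ y)^2 ≤ t^2 * 1 := by
      calc (θhat ⬝ᵥ y)^2 ≤ (θhat ⬝ᵥ θhat) * (y ⬝ᵥ y) := bexp3_dp_cs _ _
        _ ≤ t^2 * 1 := by rw [← ht2]; exact mul_le_mul_of_nonneg_left hyy hθθ
    nlinarith
  have hct : c * t ≤ 1 := by nlinarith
  intro i
  set v : Fin d → ℝ := (1 / (K : ℝ)) • ∑ j, φ i j with hv
  have hvv : v ⬝ᵥ v ≤ 1 := by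
    rw [hv]
    have cross : ∀ j k : Fin K, φ i j ⬝ᵥ φ i k ≤ 1 := by
      intro j k
      have h1 := bexp3_dp_cs (φ i j) (φ i k)
      have h2 := hφ i j
      have h3 := hφ i k
      have n1 : 0 ≤ φ i j ⬝ᵥ φ i j :=
        Finset.sum_nonneg fun a _ => mul_self_nonneg _
      have n2 : 0 ≤ φ i k ⬝ᵥ φ i k :=
        Finset.sum_nonneg fun a _ => mul_self_nonneg _
      nlinarith
    have hsum : (∑ j, φ i j) ⬝ᵥ (∑ k, φ i k) ≤ (K:ℝ)^2 := by
      rw [bexp3_dotProduct_sum]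
      calc ∑ j, (∑ k, φ i k) ⬝ᵥ φ i j
          ≤ ∑ _j : Fin K, (K:ℝ) := by
            refine Finset.sum_le_sum fun j _ => ?_
            rw [dotProduct_comm, bexp3_dotProduct_sum]
            calc ∑ k, φ i j ⬝ᵥ φ i k ≤ ∑ _k : Fin K, (1:ℝ) :=
                  Finset.sum_le_sum fun k _ => cross j k
              _ = (K:ℝ) := by simp
        _ = (K:ℝ)^2 := by simp [sq]
    rw [smul_dotProduct, dotProduct_smul, smul_eq_mul, smul_eq_mul]
    calc (1/(K:ℝ)) * ((1/(K:ℝ)) * ((∑ j, φ i j) ⬝ᵥ ∑ j, φ i j))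
        ≤ (1/(K:ℝ)) * ((1/(K:ℝ)) * (K:ℝ)^2) := by
          apply mul_le_mul_of_nonneg_left _ (by positivity)
          exact mul_le_mul_of_nonneg_left hsum (by positivity)
      _ = 1 := by field_simp
  have hBsq : (Bhat i)^2 ≤ t^2 := by
    rw [hBhat i, ← hv]
    calc (v ⬝ᵥ θhat)^2
        ≤ (v ⬝ᵥ v) * (θhat ⬝ᵥ θhat) := bexp3_dp_cs _ _
      _ ≤ 1 * t^2 := by
          rw [← ht2]
          exact mul_le_mul_of_nonneg_right hvv hθθ
      _ = t^2 := one_mul _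
  have hBt : |Bhat i| ≤ t := abs_le_of_sq_le_sq hBsq ht0
  have hgoal : lam0⁻¹ / γ ^ 2 = 1 / c := by
    rw [hc]; field_simp
  rw [hgoal]
  calc |Bhat i| ≤ t := hBt
    _ ≤ 1 / c := by
        rw [le_div_iff₀ hcpos]
        linarith [mul_comm t c]
end
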